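/- Let r > 0, reals 0 ≤ Φ < Φ′, C > 0, c′ ∈ (0,∞), and a < 0. Let W : ℝ → ℝ vanish on (−∞,0), be continuous and nondecreasing on [0,∞), be continuously differentiable on (0,∞) with W′(y) ≤ C·e^{Φy} for all y > 0, and satisfy ∫₀^∞ e^{−Φ′z}·W(z) dz = 1/r. Let V : ℝ → ℝ be nonnegative, vanish on (−∞,0), with x ↦ e^{−Φ′x}·V(x) nondecreasing on (0,∞) and converging to c′ as x → ∞. Then lim_{b→∞} [W′(b−a) + r·∫₀ᵇ V(b−y)·W′(y−a) dy] / V(b) = Φ′·e^{−Φ′a}·(1 − r·∫₀^{−a} e^{−Φ′z}W(z)dz) − r·W(−a). -/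

import Mathlib

open MeasureTheory Filter Set

/-- convergence of `M_a^{(q,r)}W^{(q)′}(b)/W^{(q+r)}(b)` as `b → ∞`
(proof of Corollary 3.5(ii), creeping). -/
theorem stmt_18 (r Φ Φ' C c' a : ℝ) (hr : 0 < r) (hΦ : 0 ≤ Φ) (hΦΦ' : Φ < Φ')
    (hC : 0 < C) (hc' : 0 < c') (ha : a < 0)
    (W V : ℝ → ℝ) (hW0 : ∀ x < 0, W x = 0)
    (hWcont : ContinuousOn W (Set.Ici 0)) (hWmono : MonotoneOn W (Set.Ici 0))
    (hWdiff : ∀ y > (0:ℝ), DifferentiableAt ℝ W y)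
    (hWderivcont : ContinuousOn (deriv W) (Set.Ioi 0))
    (hWderivbound : ∀ y > (0:ℝ), deriv W y ≤ C * Real.exp (Φ * y))
    (hWlap : (∫ z in Set.Ioi (0:ℝ), Real.exp (-Φ' * z) * W z) = 1 / r)
    (hVnn : ∀ x, 0 ≤ V x) (hV0 : ∀ x < 0, V x = 0)
    (hVmono : MonotoneOn (fun x => Real.exp (-Φ' * x) * V x) (Set.Ioi 0))
    (hVlim : Tendsto (fun x => Real.exp (-Φ' * x) * V x) atTop (nhds c')) :
    Tendsto (fun b => (deriv W (b - a)
        + r * ∫ y in (0:ℝ)..b, V (b - y) * deriv W (y - a)) / V b)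
      atTop
      (nhds (Φ' * Real.exp (-Φ' * a) *
          (1 - r * ∫ z in (0:ℝ)..(-a), Real.exp (-Φ' * z) * W z)
        - r * W (-a))) := by
  have hΦ' : 0 < Φ' := lt_of_le_of_lt hΦ hΦΦ'
  have hδ : 0 < Φ' - Φ := by linarith
  have hma : (0:ℝ) < -a := by linarith
  set g : ℝ → ℝ := fun x => Real.exp (-Φ' * x) * V x with hg
  have hVg : ∀ x, V x = Real.exp (Φ' * x) * g x := by
    intro x
    rw [hg]
    simp only
    rw [← mul_assoc, ← Real.exp_add, show Φ' * x + -Φ' * x = 0 by ring, Real.exp_zero, one_mul]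
  have hgnn : ∀ x, 0 ≤ g x := fun x => mul_nonneg (Real.exp_pos _).le (hVnn x)
  have hgle : ∀ x > (0:ℝ), g x ≤ c' := by
    intro x hx
    refine ge_of_tendsto hVlim ?_
    filter_upwards [eventually_ge_atTop x] with b hb
    exact hVmono (mem_Ioi.mpr hx) (mem_Ioi.mpr (lt_of_lt_of_le hx hb)) hb
  have hgev : ∀ᶠ b in atTop, c' / 2 < g b :=
    hVlim.eventually (eventually_gt_nhds (half_lt_self hc'))
  -- nonnegativity of the derivative of W
  have hW'nn : ∀ y > (0:ℝ), 0 ≤ deriv W y := by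
    intro y hy
    have hslope : Tendsto (slope W y) (nhdsWithin y (Ioi y)) (nhds (deriv W y)) :=
      (hasDerivAt_iff_tendsto_slope.mp (hWdiff y hy).hasDerivAt).mono_left
        (nhdsWithin_mono _ (fun z hz => (mem_Ioi.mp hz).ne'))
    refine ge_of_tendsto hslope ?_
    filter_upwards [self_mem_nhdsWithin] with z hz
    rw [slope_def_field]
    have hle : W y ≤ W z :=
      hWmono (mem_Ici.mpr hy.le) (mem_Ici.mpr (hy.trans (mem_Ioi.mp hz)).le) (mem_Ioi.mp hz).le
    have hzy : (0:ℝ) < z - y := by have := mem_Ioi.mp hz; linarith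
    exact div_nonneg (by linarith) hzy.le
  -- growth bound on W
  have hWgrow : ∀ z : ℝ, 1 ≤ z → W z ≤ W 1 + C * z * Real.exp (Φ * z) := by
    intro z hz
    have hint : IntervalIntegrable (deriv W) volume 1 z := by
      apply ContinuousOn.intervalIntegrable
      apply hWderivcont.mono
      rw [uIcc_of_le hz]
      intro t ht
      exact lt_of_lt_of_le one_pos ht.1
    have hftc : ∫ t in (1:ℝ)..z, deriv W t = W z - W 1 := by
      apply intervalIntegral.integral_deriv_eq_sub
      · intro t ht
        rw [uIcc_of_le hz] at ht
        exact hWdiff t (lt_of_lt_of_le one_pos ht.1)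
      · exact hint
    have hmono2 : ∫ t in (1:ℝ)..z, deriv W t ≤ ∫ _t in (1:ℝ)..z, C * Real.exp (Φ * z) := by
      apply intervalIntegral.integral_mono_on hz hint intervalIntegrable_const
      intro t ht
      calc deriv W t ≤ C * Real.exp (Φ * t) := hWderivbound t (lt_of_lt_of_le one_pos ht.1)
        _ ≤ C * Real.exp (Φ * z) := by
            have h1 : Real.exp (Φ * t) ≤ Real.exp (Φ * z) :=
              Real.exp_le_exp.mpr (mul_le_mul_of_nonneg_left ht.2 hΦ)
            nlinarith
    rw [intervalIntegral.integral_const, hftc, smul_eq_mul] at hmono2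
    have hexpnn : (0:ℝ) < Real.exp (Φ * z) := Real.exp_pos _
    nlinarith
  -- decay of exp(-Φ' z) * W z at infinity
  have htF : Tendsto (fun z => Real.exp (-Φ' * z) * W z) atTop (nhds 0) := by
    have hb1 : Tendsto (fun z : ℝ => |W 1| * Real.exp (-(Φ' * z))) atTop (nhds 0) := by
      have h1 : Tendsto (fun z : ℝ => Real.exp (-(Φ' * z))) atTop (nhds 0) := by
        have h2 : Tendsto (fun z : ℝ => -(Φ' * z)) atTop atBot := by
          simpa [neg_mul] using
            tendsto_id.const_mul_atTop_of_neg (show -Φ' < (0:ℝ) by linarith)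
        exact Real.tendsto_exp_atBot.comp h2
      simpa using h1.const_mul (|W 1|)
    have hb2 : Tendsto (fun z : ℝ => (C / (Φ' - Φ)) * ((Φ' - Φ) * z * Real.exp (-((Φ' - Φ) * z))))
        atTop (nhds 0) := by
      have h1 : Tendsto (fun x : ℝ => x ^ 1 * Real.exp (-x)) atTop (nhds 0) :=
        Real.tendsto_pow_mul_exp_neg_atTop_nhds_zero 1
      have h2 : Tendsto (fun z : ℝ => (Φ' - Φ) * z) atTop atTop :=
        Tendsto.const_mul_atTop hδ tendsto_id
      have h3 := h1.comp h2
      simp only [Function.comp, pow_one] at h3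
      simpa using h3.const_mul (C / (Φ' - Φ))
    have hsum : Tendsto (fun z : ℝ => |W 1| * Real.exp (-(Φ' * z))
        + (C / (Φ' - Φ)) * ((Φ' - Φ) * z * Real.exp (-((Φ' - Φ) * z)))) atTop (nhds 0) := by
      simpa using hb1.add hb2
    apply squeeze_zero_norm' _ hsum
    filter_upwards [eventually_ge_atTop 1] with z hz
    have hz0 : (0:ℝ) < z := lt_of_lt_of_le one_pos hz
    have hup : W z ≤ W 1 + C * z * Real.exp (Φ * z) := hWgrow z hz
    have hlo : W 1 ≤ W z := hWmono (mem_Ici.mpr one_pos.le) (mem_Ici.mpr hz0.le) hz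
    have hX : (0:ℝ) ≤ C * z * Real.exp (Φ * z) := by positivity
    have habs : |W z| ≤ |W 1| + C * z * Real.exp (Φ * z) := by
      rw [abs_le]
      constructor
      · have := neg_abs_le (W 1)
        linarith
      · have := le_abs_self (W 1)
        linarith
    have e1 : Real.exp (-Φ' * z) * Real.exp (Φ * z) = Real.exp (-((Φ' - Φ) * z)) := by
      rw [← Real.exp_add]
      congr 1
      ring
    have e2 : Real.exp (-Φ' * z) = Real.exp (-(Φ' * z)) := by
      congr 1
      ring
    calc ‖Real.exp (-Φ' * z) * W z‖ = Real.exp (-Φ' * z) * |W z| := by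
          rw [Real.norm_eq_abs, abs_mul, abs_of_pos (Real.exp_pos _)]
      _ ≤ Real.exp (-Φ' * z) * (|W 1| + C * z * Real.exp (Φ * z)) :=
          mul_le_mul_of_nonneg_left habs (Real.exp_pos _).le
      _ = |W 1| * Real.exp (-(Φ' * z))
          + (C * z) * (Real.exp (-Φ' * z) * Real.exp (Φ * z)) := by
          rw [← e2]; ring
      _ = |W 1| * Real.exp (-(Φ' * z))
          + (C / (Φ' - Φ)) * ((Φ' - Φ) * z * Real.exp (-((Φ' - Φ) * z))) := by
          rw [e1]
          field_simp
  -- integrability facts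
  have h1 : IntegrableOn (fun z => Real.exp (-Φ' * z) * W z) (Ioi (0:ℝ)) := by
    by_contra hcon
    rw [integral_undef hcon] at hWlap
    have h0 : (0:ℝ) < 1 / r := by positivity
    linarith [hWlap.symm.le]
  have h1' : IntegrableOn (fun z => Real.exp (-Φ' * z) * W z) (Ioi (-a)) :=
    h1.mono_set (Ioi_subset_Ioi hma.le)
  have h2 : IntegrableOn (fun z => Real.exp (-Φ' * z) * deriv W z) (Ioi (-a)) := by
    have hmeas : AEStronglyMeasurable (fun z => Real.exp (-Φ' * z) * deriv W z)
        (volume.restrict (Ioi (-a))) := by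
      apply ContinuousOn.aestronglyMeasurable _ measurableSet_Ioi
      exact ((Real.continuous_exp.comp (continuous_const.mul continuous_id)).continuousOn).mul
        (hWderivcont.mono (Ioi_subset_Ioi hma.le))
    apply Integrable.mono' ((exp_neg_integrableOn_Ioi (-a) hδ).const_mul C) hmeas
    filter_upwards [ae_restrict_mem measurableSet_Ioi] with z hz
    have hz0 : (0:ℝ) < z := lt_trans hma hz
    have hnn : 0 ≤ Real.exp (-Φ' * z) * deriv W z :=
      mul_nonneg (Real.exp_pos _).le (hW'nn z hz0)
    rw [Real.norm_eq_abs, abs_of_nonneg hnn]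
    have hb := hWderivbound z hz0
    calc Real.exp (-Φ' * z) * deriv W z ≤ Real.exp (-Φ' * z) * (C * Real.exp (Φ * z)) :=
          mul_le_mul_of_nonneg_left hb (Real.exp_pos _).le
      _ = C * Real.exp (-(Φ' - Φ) * z) := by
          rw [show -(Φ' - Φ) * z = Φ * z + -Φ' * z by ring, Real.exp_add]
          ring
  -- FTC on (−a, ∞)
  have hFTC : (∫ z in Ioi (-a), (-Φ' * (Real.exp (-Φ' * z) * W z)
      + Real.exp (-Φ' * z) * deriv W z))
      = 0 - Real.exp (-Φ' * -a) * W (-a) := by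
    have := integral_Ioi_of_hasDerivAt_of_tendsto
      (f := fun z => Real.exp (-Φ' * z) * W z) (a := -a) (m := 0)
      (f' := fun z => -Φ' * (Real.exp (-Φ' * z) * W z) + Real.exp (-Φ' * z) * deriv W z)
      ?_ ?_ ?_ ?_
    · exact this
    · have hFcont : ContinuousOn (fun z => Real.exp (-Φ' * z) * W z) (Ici (-a)) :=
        ((Real.continuous_exp.comp (continuous_const.mul continuous_id)).continuousOn).mul
          (hWcont.mono (Ici_subset_Ici.mpr hma.le))
      exact hFcont _ self_mem_Ici
    · intro z hz
      have hz0 : (0:ℝ) < z := lt_trans hma hz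
      have hlin : HasDerivAt (fun z : ℝ => -Φ' * z) (-Φ') z := by
        simpa using (hasDerivAt_id z).const_mul (-Φ')
      have hE : HasDerivAt (fun z : ℝ => Real.exp (-Φ' * z))
          (Real.exp (-Φ' * z) * -Φ') z := hlin.exp
      have hprod := hE.mul (hWdiff z hz0).hasDerivAt
      convert hprod using 1
      · rfl
      · rfl
      · ring
    · exact (h1'.const_mul (-Φ')).add h2
    · exact htF
  have hKeq : (∫ z in Ioi (-a), Real.exp (-Φ' * z) * deriv W z)
      = Φ' * (∫ z in Ioi (-a), Real.exp (-Φ' * z) * W z) - Real.exp (Φ' * a) * W (-a) := by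
    rw [integral_add (h1'.const_mul (-Φ')) h2, integral_const_mul,
      show -Φ' * -a = Φ' * a by ring] at hFTC
    linarith
  -- splitting the Laplace transform integral
  have hsplit : (∫ z in Ioc (0:ℝ) (-a), Real.exp (-Φ' * z) * W z)
      + (∫ z in Ioi (-a), Real.exp (-Φ' * z) * W z) = 1 / r := by
    have hu := setIntegral_union (μ := volume)
      (f := fun z => Real.exp (-Φ' * z) * W z)
      (Ioc_disjoint_Ioi (le_refl (-a))) measurableSet_Ioi
      (h1.mono_set Ioc_subset_Ioi_self) h1'
    rw [Ioc_union_Ioi_eq_Ioi hma.le] at hu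
    rw [← hu, hWlap]
  have hJ : (∫ z in (0:ℝ)..(-a), Real.exp (-Φ' * z) * W z)
      = ∫ z in Ioc (0:ℝ) (-a), Real.exp (-Φ' * z) * W z :=
    intervalIntegral.integral_of_le hma.le
  -- change of variables
  have himg : (fun x : ℝ => x + -a) '' Ioi (0:ℝ) = Ioi (-a) := by
    ext z
    simp only [mem_image, mem_Ioi]
    constructor
    · rintro ⟨x, hx, rfl⟩; linarith
    · intro hz; exact ⟨z + a, by linarith, by ring⟩
  have htrans : (∫ z in Ioi (-a), Real.exp (-Φ' * (z + a)) * deriv W z)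
      = ∫ y in Ioi (0:ℝ), Real.exp (-Φ' * y) * deriv W (y - a) := by
    have hMP : MeasurePreserving (fun x : ℝ => x + -a) volume volume :=
      measurePreserving_add_right volume (-a)
    have hEmb : MeasurableEmbedding (fun x : ℝ => x + -a) :=
      (MeasurableEquiv.addRight (-a)).measurableEmbedding
    rw [← himg, hMP.setIntegral_image_emb hEmb]
    apply setIntegral_congr_fun measurableSet_Ioi
    intro x _
    simp only
    rw [show x + -a + a = x by ring, sub_eq_add_neg]
  have hI : (∫ y in Ioi (0:ℝ), Real.exp (-Φ' * y) * deriv W (y - a))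
      = Real.exp (-Φ' * a) * ∫ z in Ioi (-a), Real.exp (-Φ' * z) * deriv W z := by
    rw [← htrans, ← integral_const_mul]
    apply setIntegral_congr_fun measurableSet_Ioi
    intro z _
    show Real.exp (-Φ' * (z + a)) * deriv W z
      = Real.exp (-Φ' * a) * (Real.exp (-Φ' * z) * deriv W z)
    rw [← mul_assoc, ← Real.exp_add]
    congr 2
    ring
  -- measurable modification of V
  have hgm : AEMeasurable g (volume.restrict (Ioi (0:ℝ))) :=
    aemeasurable_restrict_of_monotoneOn measurableSet_Ioi hVmono
  have hgg₀ : ∀ᵐ x : ℝ, x ∈ Ioi (0:ℝ) → g x = hgm.mk g x :=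
    (ae_restrict_iff' measurableSet_Ioi).mp hgm.ae_eq_mk
  set V₀ : ℝ → ℝ := fun x => if 0 < x then Real.exp (Φ' * x) * hgm.mk g x else 0 with hV₀def
  have hV₀m : Measurable V₀ :=
    Measurable.ite measurableSet_Ioi
      ((Real.measurable_exp.comp (measurable_const.mul measurable_id)).mul hgm.measurable_mk)
      measurable_const
  have hne : ∀ c : ℝ, ∀ᵐ x : ℝ, x ≠ c := by
    intro c
    rw [ae_iff]
    simp only [ne_eq, not_not, setOf_eq_eq_singleton]
    exact Real.volume_singleton
  have hVV₀ : V =ᶠ[ae volume] V₀ := by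
    filter_upwards [hgg₀, hne 0] with x hx h0
    rcases lt_trichotomy x 0 with h | h | h
    · rw [hV₀def]
      simp only [if_neg (not_lt.mpr h.le)]
      exact hV0 x h
    · exact absurd h h0
    · rw [hV₀def]
      simp only [if_pos h]
      rw [hVg x, hx (mem_Ioi.mpr h)]
  have hVasm : AEStronglyMeasurable V volume :=
    ⟨V₀, hV₀m.stronglyMeasurable, hVV₀⟩
  -- the dominated convergence part
  set Fn : ℝ → ℝ → ℝ :=
    fun b => (Ioc (0:ℝ) b).indicator (fun y => V (b - y) * deriv W (y - a) / V b) with hFn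
  have hW'asm : AEStronglyMeasurable (fun y => deriv W (y - a))
      (volume.restrict (Ioi (0:ℝ))) := by
    apply ContinuousOn.aestronglyMeasurable _ measurableSet_Ioi
    apply hWderivcont.comp ((continuous_id.sub continuous_const).continuousOn)
    intro y hy
    have := mem_Ioi.mp hy
    exact mem_Ioi.mpr (by show 0 < y - a; linarith)
  have hFmeas : ∀ b : ℝ, AEStronglyMeasurable (Fn b) (volume.restrict (Ioi (0:ℝ))) := by
    intro b
    simp only [hFn]
    apply AEStronglyMeasurable.indicator _ measurableSet_Ioc
    have hqmp : Measure.QuasiMeasurePreserving (fun y : ℝ => b - y) volume volume :=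
      (Measure.measurePreserving_sub_left volume b).quasiMeasurePreserving
    have haeq : (fun y : ℝ => V₀ (b - y)) =ᶠ[ae volume] (fun y : ℝ => V (b - y)) :=
      (hVV₀.symm).comp_tendsto hqmp.tendsto_ae
    have hVb : AEStronglyMeasurable (fun y => V (b - y)) volume :=
      ((hV₀m.comp (measurable_const.sub measurable_id)).aestronglyMeasurable).congr haeq
    simp only [div_eq_mul_inv]
    exact (hVb.restrict.mul hW'asm).mul_const _
  set G : ℝ → ℝ := fun y => (2 * C * Real.exp (-(Φ * a))) * Real.exp (-(Φ' - Φ) * y) with hG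
  have hGint : Integrable G (volume.restrict (Ioi (0:ℝ))) :=
    (exp_neg_integrableOn_Ioi 0 hδ).const_mul _
  have hbound : ∀ᶠ b in atTop, ∀ᵐ y ∂(volume.restrict (Ioi (0:ℝ))), ‖Fn b y‖ ≤ G y := by
    filter_upwards [hgev] with b hgb
    have hgb0 : 0 < g b := lt_of_le_of_lt (by linarith) hgb
    filter_upwards [ae_restrict_mem measurableSet_Ioi, ae_restrict_of_ae (hne b)]
      with y hy hyb
    have hy0 : (0:ℝ) < y := mem_Ioi.mp hy
    by_cases hmem : y ∈ Ioc (0:ℝ) b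
    · have hyb' : y < b := lt_of_le_of_ne hmem.2 hyb
      have hby : (0:ℝ) < b - y := by linarith
      simp only [hFn, indicator_of_mem hmem]
      have hW'y : 0 ≤ deriv W (y - a) := hW'nn _ (by linarith)
      have hW'yb : deriv W (y - a) ≤ C * Real.exp (Φ * (y - a)) :=
        hWderivbound _ (by linarith)
      have hVbpos : 0 < V b := by
        rw [hVg]
        exact mul_pos (Real.exp_pos _) hgb0
      have hval : V (b - y) * deriv W (y - a) / V b
          = Real.exp (-Φ' * y) * g (b - y) * deriv W (y - a) / g b := by
        rw [hVg (b - y), hVg b]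
        rw [show Real.exp (Φ' * (b - y)) = Real.exp (Φ' * b) * Real.exp (-Φ' * y) by
          rw [← Real.exp_add]; congr 1; ring]
        rw [div_eq_div_iff (mul_pos (Real.exp_pos _) hgb0).ne' hgb0.ne']
        ring
      have hnn : 0 ≤ V (b - y) * deriv W (y - a) / V b :=
        div_nonneg (mul_nonneg (hVnn _) hW'y) hVbpos.le
      rw [Real.norm_eq_abs, abs_of_nonneg hnn, hval]
      have step1 : Real.exp (-Φ' * y) * g (b - y) * deriv W (y - a) / g b
          ≤ Real.exp (-Φ' * y) * c' * (C * Real.exp (Φ * (y - a))) / (c' / 2) := by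
        apply div_le_div₀ (by positivity) _ (by linarith) hgb.le
        have hgc := hgle (b - y) hby
        calc Real.exp (-Φ' * y) * g (b - y) * deriv W (y - a)
            ≤ Real.exp (-Φ' * y) * c' * deriv W (y - a) :=
              mul_le_mul_of_nonneg_right
                (mul_le_mul_of_nonneg_left hgc (Real.exp_pos _).le) hW'y
          _ ≤ Real.exp (-Φ' * y) * c' * (C * Real.exp (Φ * (y - a))) :=
              mul_le_mul_of_nonneg_left hW'yb (by positivity)
      refine le_trans step1 (le_of_eq ?_)
      simp only [hG]
      rw [show Real.exp (Φ * (y - a)) = Real.exp (Φ * y) * Real.exp (-(Φ * a)) by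
        rw [← Real.exp_add]; congr 1; ring]
      rw [show Real.exp (-(Φ' - Φ) * y) = Real.exp (-Φ' * y) * Real.exp (Φ * y) by
        rw [← Real.exp_add]; congr 1; ring]
      field_simp
    · simp only [hFn, indicator_of_notMem hmem, hG, norm_zero]
      positivity
  have hlimae : ∀ᵐ y ∂(volume.restrict (Ioi (0:ℝ))),
      Tendsto (fun b => Fn b y) atTop (nhds (Real.exp (-Φ' * y) * deriv W (y - a))) := by
    filter_upwards [ae_restrict_mem measurableSet_Ioi] with y hy
    have hy0 : (0:ℝ) < y := mem_Ioi.mp hy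
    have hgy : Tendsto (fun b => g (b - y)) atTop (nhds c') := by
      have h := hVlim.comp (tendsto_atTop_add_const_right atTop (-y) tendsto_id)
      simpa [Function.comp_def, sub_eq_add_neg] using h
    have hq : Tendsto (fun b => g (b - y) / g b) atTop (nhds 1) := by
      have h := hgy.div hVlim hc'.ne'
      simpa [Pi.div_def, div_self hc'.ne'] using h
    have hmain : Tendsto (fun b => Real.exp (-Φ' * y) * (g (b - y) / g b) * deriv W (y - a))
        atTop (nhds (Real.exp (-Φ' * y) * 1 * deriv W (y - a))) :=
      (tendsto_const_nhds.mul hq).mul tendsto_const_nhds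
    rw [show Real.exp (-Φ' * y) * 1 * deriv W (y - a)
      = Real.exp (-Φ' * y) * deriv W (y - a) by ring] at hmain
    apply hmain.congr'
    filter_upwards [eventually_gt_atTop y, hgev] with b hb hgb
    have hgb0 : 0 < g b := lt_of_le_of_lt (by linarith) hgb
    have hmem : y ∈ Ioc (0:ℝ) b := ⟨hy0, hb.le⟩
    simp only [hFn, indicator_of_mem hmem]
    rw [hVg (b - y), hVg b]
    rw [show Real.exp (Φ' * (b - y)) = Real.exp (Φ' * b) * Real.exp (-Φ' * y) by
      rw [← Real.exp_add]; congr 1; ring]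
    rw [eq_div_iff (mul_pos (Real.exp_pos _) hgb0).ne']
    field_simp
  have hDCT : Tendsto (fun b => ∫ y in Ioi (0:ℝ), Fn b y) atTop
      (nhds (∫ y in Ioi (0:ℝ), Real.exp (-Φ' * y) * deriv W (y - a))) :=
    tendsto_integral_filter_of_dominated_convergence G
      (Eventually.of_forall hFmeas) hbound hGint hlimae
  -- first term tends to zero
  have T1 : Tendsto (fun b => deriv W (b - a) / V b) atTop (nhds 0) := by
    have hDlim : Tendsto (fun b : ℝ => (2 * C / c' * Real.exp (-(Φ * a)))
        * Real.exp (-(Φ' - Φ) * b)) atTop (nhds 0) := by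
      have h1 : Tendsto (fun b : ℝ => Real.exp (-(Φ' - Φ) * b)) atTop (nhds 0) := by
        have h2 : Tendsto (fun b : ℝ => -(Φ' - Φ) * b) atTop atBot :=
          tendsto_id.const_mul_atTop_of_neg (by linarith)
        exact Real.tendsto_exp_atBot.comp h2
      simpa using h1.const_mul (2 * C / c' * Real.exp (-(Φ * a)))
    apply squeeze_zero' _ _ hDlim
    · filter_upwards [eventually_gt_atTop 0, hgev] with b hb hgb
      have hgb0 : 0 < g b := lt_of_le_of_lt (by linarith) hgb
      have hVbpos : 0 < V b := by
        rw [hVg]; exact mul_pos (Real.exp_pos _) hgb0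
      exact div_nonneg (hW'nn _ (by linarith)) hVbpos.le
    · filter_upwards [eventually_gt_atTop 0, hgev] with b hb hgb
      have hgb0 : 0 < g b := lt_of_le_of_lt (by linarith) hgb
      have hVlb : Real.exp (Φ' * b) * (c' / 2) ≤ V b := by
        rw [hVg]
        exact mul_le_mul_of_nonneg_left hgb.le (Real.exp_pos _).le
      calc deriv W (b - a) / V b
          ≤ (C * Real.exp (Φ * (b - a))) / (Real.exp (Φ' * b) * (c' / 2)) :=
            div_le_div₀ (by positivity) (hWderivbound _ (by linarith))
              (mul_pos (Real.exp_pos _) (by linarith)) hVlb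
        _ = (2 * C / c' * Real.exp (-(Φ * a))) * Real.exp (-(Φ' - Φ) * b) := by
            rw [show Real.exp (Φ * (b - a)) = Real.exp (Φ * b) * Real.exp (-(Φ * a)) by
              rw [← Real.exp_add]; congr 1; ring]
            rw [show Real.exp (-(Φ' - Φ) * b) = Real.exp (Φ * b) / Real.exp (Φ' * b) by
              rw [show -(Φ' - Φ) * b = Φ * b - Φ' * b by ring, Real.exp_sub]]
            field_simp
  -- combine
  have hcomb : Tendsto (fun b => deriv W (b - a) / V b + r * ∫ y in Ioi (0:ℝ), Fn b y) atTop
      (nhds (0 + r * ∫ y in Ioi (0:ℝ), Real.exp (-Φ' * y) * deriv W (y - a))) :=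
    T1.add (hDCT.const_mul r)
  have hval : (0:ℝ) + r * (∫ y in Ioi (0:ℝ), Real.exp (-Φ' * y) * deriv W (y - a))
      = Φ' * Real.exp (-Φ' * a) * (1 - r * ∫ z in (0:ℝ)..(-a), Real.exp (-Φ' * z) * W z)
        - r * W (-a) := by
    rw [hI, hKeq, hJ]
    have hIoiA : (∫ z in Ioi (-a), Real.exp (-Φ' * z) * W z)
        = 1 / r - ∫ z in Ioc (0:ℝ) (-a), Real.exp (-Φ' * z) * W z := by linarith
    rw [hIoiA]
    have hee : Real.exp (-Φ' * a) * Real.exp (Φ' * a) = 1 := by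
      rw [← Real.exp_add, show -Φ' * a + Φ' * a = 0 by ring, Real.exp_zero]
    have h1r : r * (1 / r) = 1 := by field_simp
    linear_combination (Real.exp (-Φ' * a) * Φ') * h1r - (r * W (-a)) * hee
  have heq : (fun b => deriv W (b - a) / V b + r * ∫ y in Ioi (0:ℝ), Fn b y)
      =ᶠ[atTop] (fun b => (deriv W (b - a)
        + r * ∫ y in (0:ℝ)..b, V (b - y) * deriv W (y - a)) / V b) := by
    filter_upwards [eventually_gt_atTop 0, hgev] with b hb hgb
    have hgb0 : 0 < g b := lt_of_le_of_lt (by linarith) hgb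
    have hVbpos : 0 < V b := by
      rw [hVg]; exact mul_pos (Real.exp_pos _) hgb0
    have hindic : ∫ y in Ioi (0:ℝ), Fn b y
        = (∫ y in Ioc (0:ℝ) b, V (b - y) * deriv W (y - a)) / V b := by
      simp only [hFn]
      rw [setIntegral_indicator measurableSet_Ioc,
        inter_eq_self_of_subset_right Ioc_subset_Ioi_self, integral_div]
    rw [hindic, intervalIntegral.integral_of_le hb.le]
    field_simp [hVbpos.ne']
  rw [hval] at hcomb
  exact Tendsto.congr' heq hcomb
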